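/- The set of points (x, y) in the positive integer lattice such that the word 1^y 0^{x-y} is Ulam (with 1 ≤ y ≤ x) equals {(1,1)} ∪ S, where S is the discrete Sierpiński triangle defined by S_0 = {(2,1)}, S_{n+1} = S_n ∪ (S_n + (2^n, 0)) ∪ (S_n + (2^n, 2^n)), and S = ∪_n S_n. -/

import Mathlib

/-- Ulam words with fuel bounding the recursion depth (fuel ≥ length suffices). -/
def UlamN : ℕ → List Bool → Prop
  | 0, _ => False
  | n + 1, w =>
    w = [false] ∨ w = [true] ∨
      ∃! p : List Bool × List Bool,
        p.1 ≠ [] ∧ p.2 ≠ [] ∧ UlamN n p.1 ∧ UlamN n p.2 ∧ p.1 ≠ p.2 ∧ p.1 ++ p.2 = w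

/-- A word over {0,1} (`false` = 0, `true` = 1) is Ulam. -/
def IsUlam (w : List Bool) : Prop := UlamN w.length w

/-- The integer whose binary representation (most significant digit first) is `w`. -/
def binVal (w : List Bool) : ℕ := w.foldl (fun acc b => 2 * acc + b.toNat) 0


/-- The finite stages of the discrete Sierpiński triangle. -/
def SierpinskiStage : ℕ → Set (ℕ × ℕ)
  | 0 => {(2, 1)}
  | n + 1 =>
      SierpinskiStage n ∪ ((fun p => p + ((2 ^ n : ℕ), (0 : ℕ))) '' SierpinskiStage n) ∪
        ((fun p => p + ((2 ^ n : ℕ), (2 ^ n : ℕ))) '' SierpinskiStage n)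

/-! ### Auxiliary lemmas -/

lemma ulamN_nil (n : ℕ) : ¬ UlamN n [] := by
  cases n with
  | zero => exact id
  | succ n =>
    rintro (h | h | ⟨p, ⟨h1, h2, _, _, _, happ⟩, _⟩)
    · exact List.cons_ne_nil _ _ h.symm
    · exact List.cons_ne_nil _ _ h.symm
    · rcases List.append_eq_nil_iff.1 happ with ⟨e1, _⟩; exact h1 e1

lemma ulamN_congr_aux : ∀ (L : ℕ) (w : List Bool), w.length ≤ L → ∀ n m, w.length ≤ n →
    w.length ≤ m → (UlamN n w ↔ UlamN m w) := by
  intro L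
  induction L with
  | zero =>
    intro w hw n m _ _
    have : w = [] := List.eq_nil_of_length_eq_zero (Nat.le_zero.1 hw)
    subst this
    simp [ulamN_nil]
  | succ L ih =>
    intro w hw n m hn hm
    cases n with
    | zero =>
      have : w = [] := List.eq_nil_of_length_eq_zero (Nat.le_zero.1 hn)
      subst this; simp [ulamN_nil]
    | succ n =>
      cases m with
      | zero =>
        have : w = [] := List.eq_nil_of_length_eq_zero (Nat.le_zero.1 hm)
        subst this; simp [ulamN_nil]
      | succ m =>
        show (w = [false] ∨ w = [true] ∨ _) ↔ (w = [false] ∨ w = [true] ∨ _)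
        refine or_congr Iff.rfl (or_congr Iff.rfl (existsUnique_congr fun p => ?_))
        constructor
        · rintro ⟨h1, h2, h3, h4, h5, h6⟩
          have hlen : p.1.length + p.2.length = w.length := by
            rw [← h6]; simp
          have hp1 : 1 ≤ p.1.length := List.length_pos_iff.2 h1
          have hp2 : 1 ≤ p.2.length := List.length_pos_iff.2 h2
          refine ⟨h1, h2, ?_, ?_, h5, h6⟩
          · exact (ih p.1 (by omega) n m (by omega) (by omega)).1 h3
          · exact (ih p.2 (by omega) n m (by omega) (by omega)).1 h4
        · rintro ⟨h1, h2, h3, h4, h5, h6⟩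
          have hlen : p.1.length + p.2.length = w.length := by
            rw [← h6]; simp
          have hp1 : 1 ≤ p.1.length := List.length_pos_iff.2 h1
          have hp2 : 1 ≤ p.2.length := List.length_pos_iff.2 h2
          refine ⟨h1, h2, ?_, ?_, h5, h6⟩
          · exact (ih p.1 (by omega) m n (by omega) (by omega)).1 h3
          · exact (ih p.2 (by omega) m n (by omega) (by omega)).1 h4

lemma ulamN_iff_isUlam {w : List Bool} {n : ℕ} (h : w.length ≤ n) : UlamN n w ↔ IsUlam w :=
  ulamN_congr_aux w.length w le_rfl n w.length h le_rfl

lemma isUlam_single (b : Bool) : IsUlam [b] := by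
  cases b
  · exact Or.inl rfl
  · exact Or.inr (Or.inl rfl)

lemma not_isUlam_replicate (c : Bool) : ∀ k, k ≠ 1 → ¬ IsUlam (List.replicate k c) := by
  intro k
  induction k using Nat.strong_induction_on with
  | _ k ih =>
    intro hk hU
    match k, hk with
    | 0, _ => exact ulamN_nil _ hU
    | (k+2), _ =>
      have hlen : (List.replicate (k+2) c).length = k + 2 := by simp
      rcases (show UlamN (k+1+1) (List.replicate (k+2) c) from by
          rw [IsUlam, hlen] at hU; exact hU) with h | h | ⟨p, ⟨h1, h2, h3, h4, h5, h6⟩, _⟩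
      · have := congrArg List.length h; simp at this
      · have := congrArg List.length h; simp at this
      · have hall1 : ∀ x ∈ p.1, x = c := fun x hx =>
          List.eq_of_mem_replicate (h6 ▸ List.mem_append_left _ hx : x ∈ List.replicate (k+2) c)
        have hall2 : ∀ x ∈ p.2, x = c := fun x hx =>
          List.eq_of_mem_replicate (h6 ▸ List.mem_append_right _ hx : x ∈ List.replicate (k+2) c)
        have e1 : p.1 = List.replicate p.1.length c := List.eq_replicate_iff.2 ⟨rfl, hall1⟩
        have e2 : p.2 = List.replicate p.2.length c := List.eq_replicate_iff.2 ⟨rfl, hall2⟩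
        have hlen2 : p.1.length + p.2.length = k + 2 := by
          have := congrArg List.length h6; simpa using this
        have hp1 : 1 ≤ p.1.length := List.length_pos_iff.2 h1
        have hp2 : 1 ≤ p.2.length := List.length_pos_iff.2 h2
        have hu1 : IsUlam p.1 := (ulamN_iff_isUlam (by omega)).1 h3
        have hu2 : IsUlam p.2 := (ulamN_iff_isUlam (by omega)).1 h4
        have l1 : p.1.length = 1 := by
          by_contra hne
          exact ih p.1.length (by omega) hne (e1 ▸ hu1)
        have l2 : p.2.length = 1 := by
          by_contra hne
          exact ih p.2.length (by omega) hne (e2 ▸ hu2)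
        exact h5 (by rw [e1, e2, l1, l2])

lemma isUlam_replicate_iff (c : Bool) (k : ℕ) : IsUlam (List.replicate k c) ↔ k = 1 := by
  constructor
  · intro h; by_contra hk; exact not_isUlam_replicate c k hk h
  · rintro rfl; exact isUlam_single c

lemma split_shape {a b : ℕ} {u1 u2 : List Bool}
    (h : u1 ++ u2 = List.replicate a true ++ List.replicate b false)
    (h1 : u1 ≠ []) (h2 : u2 ≠ []) :
    ∃ k, 1 ≤ k ∧ k ≤ a + b - 1 ∧
      u1 = List.replicate (min k a) true ++ List.replicate (k - a) false ∧
      u2 = List.replicate (a - k) true ++ List.replicate (b - (k - a)) false := by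
  set k := u1.length with hk
  have hlen : u1.length + u2.length = a + b := by
    have := congrArg List.length h; simpa using this
  have hp1 : 1 ≤ u1.length := List.length_pos_iff.2 h1
  have hp2 : 1 ≤ u2.length := List.length_pos_iff.2 h2
  refine ⟨k, hp1, by omega, ?_, ?_⟩
  · have : u1 = (u1 ++ u2).take k := by simp [hk]
    rw [this, h, List.take_append, List.take_replicate, List.take_replicate,
      List.length_replicate]
    have hmin : (k - a) ⊓ b = k - a := by omega
    rw [hmin]
  · have : u2 = (u1 ++ u2).drop k := by simp [hk]
    rw [this, h, List.drop_append, List.drop_replicate, List.drop_replicate,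
      List.length_replicate]

lemma existsUnique_pair {α : Type*} {d1 d2 : α} {c1 c2 : Prop} (h : d1 ≠ d2) :
    (∃! p, (p = d1 ∧ c1) ∨ (p = d2 ∧ c2)) ↔ ((c1 ∧ ¬ c2) ∨ (c2 ∧ ¬ c1)) := by
  constructor
  · rintro ⟨p, hp | hp, huniq⟩
    · rcases hp with ⟨rfl, hc1⟩
      left
      refine ⟨hc1, fun hc2 => h ?_⟩
      exact (huniq d2 (Or.inr ⟨rfl, hc2⟩)).symm.trans rfl |>.symm ▸ (huniq d2 (Or.inr ⟨rfl, hc2⟩))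
    · rcases hp with ⟨rfl, hc2⟩
      right
      refine ⟨hc2, fun hc1 => h ?_⟩
      exact huniq d1 (Or.inl ⟨rfl, hc1⟩)
  · rintro (⟨hc1, hnc2⟩ | ⟨hc2, hnc1⟩)
    · exact ⟨d1, Or.inl ⟨rfl, hc1⟩, by rintro q (⟨rfl, _⟩ | ⟨rfl, hc2⟩); rfl; exact absurd hc2 hnc2⟩
    · exact ⟨d2, Or.inr ⟨rfl, hc2⟩, by rintro q (⟨rfl, hc1⟩ | ⟨rfl, _⟩); exact absurd hc1 hnc1; rfl⟩

lemma ulamN_single (b : Bool) (m : ℕ) : UlamN (m + 1) [b] := by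
  cases b
  · exact Or.inl rfl
  · exact Or.inr (Or.inl rfl)

lemma main_lemma : ∀ (N a b : ℕ), a + b ≤ N → 1 ≤ a → 1 ≤ b →
    (IsUlam (List.replicate a true ++ List.replicate b false) ↔
      (a + b - 2).choose (a - 1) % 2 = 1) := by
  intro N
  induction N with
  | zero => intro a b h ha hb; omega
  | succ N ih =>
    intro a b hN ha hb
    obtain ⟨m, hm⟩ : ∃ m, a + b = m + 2 := ⟨a + b - 2, by omega⟩
    have hwlen : (List.replicate a true ++ List.replicate b false).length = a + b := by simp
    have hU : IsUlam (List.replicate a true ++ List.replicate b false) ↔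
        ((List.replicate a true ++ List.replicate b false) = [false] ∨
         (List.replicate a true ++ List.replicate b false) = [true] ∨
          ∃! p : List Bool × List Bool,
            p.1 ≠ [] ∧ p.2 ≠ [] ∧ UlamN (m + 1) p.1 ∧ UlamN (m + 1) p.2 ∧ p.1 ≠ p.2 ∧
              p.1 ++ p.2 = List.replicate a true ++ List.replicate b false) := by
      rw [IsUlam, hwlen, hm]
      exact Iff.rfl
    have hne_false : (List.replicate a true ++ List.replicate b false) ≠ [false] := by
      intro e; have := congrArg List.length e; rw [hwlen] at this; simp at this; omega
    have hne_true : (List.replicate a true ++ List.replicate b false) ≠ [true] := by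
      intro e; have := congrArg List.length e; rw [hwlen] at this; simp at this; omega
    -- the two candidate decompositions
    have happ1 : [true] ++ (List.replicate (a - 1) true ++ List.replicate b false) =
        List.replicate a true ++ List.replicate b false := by
      have h1 : List.replicate a (true : Bool) = true :: List.replicate (a - 1) true := by
        conv_lhs => rw [show a = (a - 1) + 1 by omega]
        rw [List.replicate_succ]
      rw [h1]; rfl
    have happ2 : (List.replicate a true ++ List.replicate (b - 1) false) ++ [false] =
        List.replicate a true ++ List.replicate b false := by
      have h1 : List.replicate b (false : Bool) = List.replicate (b - 1) false ++ [false] := by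
        conv_lhs => rw [show b = (b - 1) + 1 by omega]
        rw [List.replicate_succ']
      rw [h1, List.append_assoc]
    have hlen2' : (List.replicate (a - 1) true ++ List.replicate b false).length = a + b - 1 := by
      simp; omega
    have hlen1' : (List.replicate a true ++ List.replicate (b - 1) false).length = a + b - 1 := by
      simp; omega
    by_cases hab : a + b = 2
    · -- the base case a = b = 1
      have ha1 : a = 1 := by omega
      have hb1 : b = 1 := by omega
      subst ha1; subst hb1
      have hm0 : m = 0 := by omega
      subst hm0
      constructor
      · intro _; rfl
      · intro _
        rw [hU]
        refine Or.inr (Or.inr ⟨([true], [false]), ⟨by simp, by simp, ulamN_single true 0,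
          ulamN_single false 0, by simp, by simp [List.replicate]⟩, ?_⟩)
        rintro ⟨q1, q2⟩ ⟨h1, h2, h3, h4, h5, h6⟩
        obtain ⟨k, hk1, hk2, e1, e2⟩ := split_shape h6 h1 h2
        have hk : k = 1 := by omega
        subst hk
        simp at e1 e2
        simp [e1, e2]
    · -- general case: a + b ≥ 3
      have hab3 : 3 ≤ a + b := by omega
      have hclaim : ∀ p : List Bool × List Bool,
          (p.1 ≠ [] ∧ p.2 ≠ [] ∧ UlamN (m + 1) p.1 ∧ UlamN (m + 1) p.2 ∧ p.1 ≠ p.2 ∧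
            p.1 ++ p.2 = List.replicate a true ++ List.replicate b false) ↔
          ((p = (([true], List.replicate (a - 1) true ++ List.replicate b false) :
              List Bool × List Bool) ∧ IsUlam (List.replicate (a - 1) true ++ List.replicate b false)) ∨
           (p = ((List.replicate a true ++ List.replicate (b - 1) false, [false]) :
              List Bool × List Bool) ∧ IsUlam (List.replicate a true ++ List.replicate (b - 1) false))) := by
        rintro ⟨q1, q2⟩
        constructor
        · rintro ⟨h1, h2, h3, h4, h5, h6⟩
          obtain ⟨k, hk1, hk2, e1, e2⟩ := split_shape h6 h1 h2
          change q1 = _ at e1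
          change q2 = _ at e2
          have hl1 : q1.length = k := by
            rw [e1]; simp; omega
          have hl2 : q2.length = a + b - k := by
            rw [e2]; simp; omega
          have hu1 : IsUlam q1 := (ulamN_iff_isUlam (by omega)).1 h3
          have hu2 : IsUlam q2 := (ulamN_iff_isUlam (by omega)).1 h4
          rcases le_or_gt k a with hka | hka
          · -- q1 is a block of trues
            have e1' : q1 = List.replicate k true := by
              rw [e1, show k - a = 0 by omega, show min k a = k by omega]
              simp
            have hk1' : k = 1 := (isUlam_replicate_iff true k).1 (e1' ▸ hu1)
            subst hk1'
            left
            have e2' : q2 = List.replicate (a - 1) true ++ List.replicate b false := by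
              rw [e2, show 1 - a = 0 by omega, Nat.sub_zero]
            refine ⟨?_, e2' ▸ hu2⟩
            rw [Prod.mk.injEq]
            exact ⟨by rw [e1']; rfl, e2'⟩
          · -- q2 is a block of falses
            have e2' : q2 = List.replicate (b - (k - a)) false := by
              rw [e2, show a - k = 0 by omega]; simp
            have hbk : b - (k - a) = 1 := (isUlam_replicate_iff false _).1 (e2' ▸ hu2)
            have hk' : k = a + b - 1 := by omega
            subst hk'
            right
            have e1' : q1 = List.replicate a true ++ List.replicate (b - 1) false := by
              rw [e1, show min (a + b - 1) a = a by omega, show a + b - 1 - a = b - 1 by omega]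
            refine ⟨?_, e1' ▸ hu1⟩
            rw [Prod.mk.injEq]
            refine ⟨e1', ?_⟩
            rw [e2', hbk]
            rfl
        · rintro (⟨he, hc⟩ | ⟨he, hc⟩) <;>
            rw [Prod.mk.injEq] at he <;> obtain ⟨he1, he2⟩ := he <;> subst he1 <;> subst he2
          · refine ⟨by simp, ?_, ulamN_single true m, ?_, ?_, happ1⟩
            · intro e
              have := congrArg List.length e
              rw [hlen2'] at this; simp at this; omega
            · exact (ulamN_iff_isUlam (by rw [hlen2']; omega)).2 hc
            · intro e
              have := congrArg List.length e
              rw [← e] at this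
              have h2 := congrArg List.length e
              rw [hlen2'] at h2; simp at h2; omega
          · refine ⟨?_, by simp, ?_, ulamN_single false m, ?_, happ2⟩
            · intro e
              have := congrArg List.length e
              rw [hlen1'] at this; simp at this; omega
            · exact (ulamN_iff_isUlam (by rw [hlen1']; omega)).2 hc
            · intro e
              have h2 := congrArg List.length e
              rw [hlen1'] at h2; simp at h2; omega
      have hD12 : (([true], List.replicate (a - 1) true ++ List.replicate b false) :
          List Bool × List Bool) ≠
          ((List.replicate a true ++ List.replicate (b - 1) false, [false]) :
            List Bool × List Bool) := by
        intro e
        have := congrArg (fun p : List Bool × List Bool => p.1.length) e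
        simp at this
        omega
      rw [hU, or_iff_right hne_false, or_iff_right hne_true,
        existsUnique_congr hclaim, existsUnique_pair hD12]
      -- now evaluate c1 and c2
      rcases Nat.lt_or_ge a 2 with ha2 | ha2
      · -- a = 1, b ≥ 2
        have ha1 : a = 1 := by omega
        subst ha1
        have hnc1 : ¬ IsUlam (List.replicate (1 - 1) true ++ List.replicate b false) := by
          simp only [Nat.sub_self, List.replicate_zero, List.nil_append]
          exact not_isUlam_replicate false b (by omega)
        have hc2' : IsUlam (List.replicate 1 true ++ List.replicate (b - 1) false) := by
          refine (ih 1 (b - 1) (by omega) le_rfl (by omega)).2 ?_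
          simp
        have hT : (1 + b - 2).choose 0 % 2 = 1 := by simp
        constructor
        · intro _; exact hT
        · intro _; exact Or.inr ⟨hc2', hnc1⟩
      · rcases Nat.lt_or_ge b 2 with hb2 | hb2
        · -- b = 1, a ≥ 2
          have hb1 : b = 1 := by omega
          subst hb1
          have hnc2 : ¬ IsUlam (List.replicate a true ++ List.replicate (1 - 1) false) := by
            simp only [Nat.sub_self, List.replicate_zero, List.append_nil]
            exact not_isUlam_replicate true a (by omega)
          have hc1' : IsUlam (List.replicate (a - 1) true ++ List.replicate 1 false) := by
            refine (ih (a - 1) 1 (by omega) (by omega) le_rfl).2 ?_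
            rw [show a - 1 + 1 - 2 = a - 2 by omega, show a - 1 - 1 = a - 2 by omega]
            simp [Nat.choose_self]
          have hT : (a + 1 - 2).choose (a - 1) % 2 = 1 := by
            rw [show a + 1 - 2 = a - 1 by omega]
            simp [Nat.choose_self]
          constructor
          · intro _; exact hT
          · intro _; exact Or.inl ⟨hc1', hnc2⟩
        · -- a, b ≥ 2
          have hc1' : IsUlam (List.replicate (a - 1) true ++ List.replicate b false) ↔
              (a + b - 3).choose (a - 2) % 2 = 1 := by
            have := ih (a - 1) b (by omega) (by omega) hb
            rw [show a - 1 + b - 2 = a + b - 3 by omega, show a - 1 - 1 = a - 2 by omega] at this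
            exact this
          have hc2' : IsUlam (List.replicate a true ++ List.replicate (b - 1) false) ↔
              (a + b - 3).choose (a - 1) % 2 = 1 := by
            have := ih a (b - 1) (by omega) ha (by omega)
            rw [show a + (b - 1) - 2 = a + b - 3 by omega] at this
            exact this
          have hpas : (a + b - 2).choose (a - 1) =
              (a + b - 3).choose (a - 2) + (a + b - 3).choose (a - 1) := by
            have h := Nat.choose_succ_succ (a + b - 3) (a - 2)
            rw [show (a + b - 3).succ = a + b - 2 by omega,
              show (a - 2).succ = a - 1 by omega] at h
            exact h
          rw [hc1', hc2', hpas]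
          omega

lemma choose_two_pow_add (n : ℕ) : ∀ m k : ℕ, m < 2 ^ n →
    (2 ^ n + m).choose k % 2 =
      (m.choose k + if 2 ^ n ≤ k then m.choose (k - 2 ^ n) else 0) % 2 := by
  intro m
  induction m with
  | zero =>
    intro k hm
    rcases eq_or_ne k 0 with rfl | hk0
    · simp
    rcases eq_or_ne k (2 ^ n) with rfl | hkp
    · simp [Nat.choose_eq_zero_of_lt (Nat.pos_of_ne_zero hk0)]
    · have hdvd : 2 ∣ (2 ^ n).choose k := Nat.Prime.dvd_choose_pow Nat.prime_two hk0 hkp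
      rw [Nat.add_zero]
      obtain ⟨c, hc⟩ := hdvd
      rw [hc]
      have h1 : Nat.choose 0 k = 0 := Nat.choose_eq_zero_of_lt (Nat.pos_of_ne_zero hk0)
      rcases le_or_gt (2 ^ n) k with h | h
      · have h2 : Nat.choose 0 (k - 2 ^ n) = 0 := by
          apply Nat.choose_eq_zero_of_lt
          have : 2 ^ n < k := lt_of_le_of_ne h (Ne.symm hkp)
          omega
        rw [if_pos h, h1, h2]
        omega
      · rw [if_neg (not_le.2 h), h1]
        omega
  | succ m ihm =>
    intro k hm
    have hm' : m < 2 ^ n := by omega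
    rcases eq_or_ne k 0 with rfl | hk0
    · simp
    obtain ⟨j, rfl⟩ : ∃ j, k = j + 1 := ⟨k - 1, by omega⟩
    have hL : (2 ^ n + (m + 1)).choose (j + 1) =
        (2 ^ n + m).choose j + (2 ^ n + m).choose (j + 1) := by
      rw [show 2 ^ n + (m + 1) = (2 ^ n + m) + 1 by omega]
      exact Nat.choose_succ_succ _ _
    have hR : (m + 1).choose (j + 1) = m.choose j + m.choose (j + 1) :=
      Nat.choose_succ_succ _ _
    have hj := ihm j hm'
    have hj1 := ihm (j + 1) hm'
    rcases lt_trichotomy (j + 1) (2 ^ n) with hc | hc | hc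
    · rw [if_neg (show ¬ 2 ^ n ≤ j by omega)] at hj
      rw [if_neg (show ¬ 2 ^ n ≤ j + 1 by omega)] at hj1 ⊢
      rw [hL, hR]
      omega
    · -- j + 1 = 2 ^ n
      rw [if_neg (show ¬ 2 ^ n ≤ j by omega)] at hj
      rw [if_pos (show 2 ^ n ≤ j + 1 by omega)] at hj1 ⊢
      have hz1 : m.choose j = 0 := Nat.choose_eq_zero_of_lt (by omega)
      have hz2 : m.choose (j + 1) = 0 := Nat.choose_eq_zero_of_lt (by omega)
      have hz3 : (m + 1).choose (j + 1) = 0 := Nat.choose_eq_zero_of_lt (by omega)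
      have he : j + 1 - 2 ^ n = 0 := by omega
      rw [hL, hR, he]
      simp only [he, hz1, hz2, hz3, Nat.choose_zero_right, Nat.zero_add, Nat.add_zero]
        at hj hj1 ⊢
      omega
    · -- j + 1 > 2 ^ n
      rw [if_pos (show 2 ^ n ≤ j by omega)] at hj
      rw [if_pos (show 2 ^ n ≤ j + 1 by omega)] at hj1 ⊢
      have hz1 : m.choose j = 0 := Nat.choose_eq_zero_of_lt (by omega)
      have hz2 : m.choose (j + 1) = 0 := Nat.choose_eq_zero_of_lt (by omega)
      have hz3 : (m + 1).choose (j + 1) = 0 := Nat.choose_eq_zero_of_lt (by omega)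
      have hR' : (m + 1).choose (j + 1 - 2 ^ n) =
          m.choose (j - 2 ^ n) + m.choose (j + 1 - 2 ^ n) := by
        rw [show j + 1 - 2 ^ n = (j - 2 ^ n) + 1 by omega]
        exact Nat.choose_succ_succ _ _
      rw [hL, hz3, hR']
      rw [hz1, hz2] at *
      omega

lemma stage_eq (n : ℕ) : SierpinskiStage n =
    {p : ℕ × ℕ | 2 ≤ p.1 ∧ p.1 ≤ 2 ^ n + 1 ∧ 1 ≤ p.2 ∧ (p.1 - 2).choose (p.2 - 1) % 2 = 1} := by
  induction n with
  | zero =>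
    ext ⟨x, y⟩
    simp only [SierpinskiStage, Set.mem_singleton_iff, Set.mem_setOf_eq, Prod.mk.injEq, pow_zero]
    constructor
    · rintro ⟨rfl, rfl⟩; simp
    · rintro ⟨hx1, hx2, hy, hch⟩
      have hx : x = 2 := by omega
      subst hx
      refine ⟨rfl, ?_⟩
      by_contra hy1
      have : 0 < y - 1 := by omega
      rw [Nat.choose_eq_zero_of_lt (by omega)] at hch
      omega
  | succ n ihn =>
    ext ⟨x, y⟩
    simp only [SierpinskiStage, ihn, Set.mem_union, Set.mem_image, Set.mem_setOf_eq,
      Prod.exists, Prod.mk.injEq, Prod.mk_add_mk]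
    constructor
    · rintro ((⟨h1, h2, h3, h4⟩ | ⟨x0, y0, ⟨h1, h2, h3, h4⟩, he1, he2⟩) |
        ⟨x0, y0, ⟨h1, h2, h3, h4⟩, he1, he2⟩)
      · exact ⟨h1, by have := Nat.one_le_two_pow (n := n); omega, h3, h4⟩
      · -- translate by (2^n, 0)
        have hyx : y0 - 1 ≤ x0 - 2 := by
          by_contra hcon
          rw [Nat.choose_eq_zero_of_lt (by omega)] at h4
          omega
        subst he1; subst he2
        refine ⟨by omega, by omega, by omega, ?_⟩
        have he : x0 + 2 ^ n - 2 = 2 ^ n + (x0 - 2) := by omega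
        rw [show y0 + 0 = y0 by omega, he, choose_two_pow_add n (x0 - 2) (y0 - 1) (by omega),
          if_neg (by omega)]
        omega
      · -- translate by (2^n, 2^n)
        have hyx : y0 - 1 ≤ x0 - 2 := by
          by_contra hcon
          rw [Nat.choose_eq_zero_of_lt (by omega)] at h4
          omega
        subst he1; subst he2
        refine ⟨by omega, by omega, by omega, ?_⟩
        have he : x0 + 2 ^ n - 2 = 2 ^ n + (x0 - 2) := by omega
        rw [he, choose_two_pow_add n (x0 - 2) (y0 + 2 ^ n - 1) (by omega),
          if_pos (by omega), Nat.choose_eq_zero_of_lt (by omega),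
          show y0 + 2 ^ n - 1 - 2 ^ n = y0 - 1 by omega]
        omega
    · rintro ⟨h1, h2, h3, h4⟩
      rcases le_or_gt x (2 ^ n + 1) with hx | hx
      · exact Or.inl (Or.inl ⟨h1, hx, h3, h4⟩)
      · have he : x - 2 = 2 ^ n + (x - 2 - 2 ^ n) := by
          have := Nat.one_le_two_pow (n := n); omega
        have hm : x - 2 - 2 ^ n < 2 ^ n := by
          have : (2:ℕ) ^ (n + 1) = 2 ^ n + 2 ^ n := by rw [pow_succ]; omega
          omega
        rw [he, choose_two_pow_add n _ _ hm] at h4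
        rcases le_or_gt (2 ^ n) (y - 1) with hy | hy
        · -- in the (2^n, 2^n) translate
          rw [if_pos hy, Nat.choose_eq_zero_of_lt (by omega)] at h4
          refine Or.inr ⟨x - 2 ^ n, y - 2 ^ n, ⟨by omega, by omega, by omega, ?_⟩,
            by omega, by omega⟩
          rw [show x - 2 ^ n - 2 = x - 2 - 2 ^ n by omega,
            show y - 2 ^ n - 1 = y - 1 - 2 ^ n by omega]
          omega
        · -- in the (2^n, 0) translate
          rw [if_neg (by omega)] at h4
          refine Or.inl (Or.inr ⟨x - 2 ^ n, y, ⟨by omega, by omega, h3, ?_⟩, by omega, by omega⟩)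
          rw [show x - 2 ^ n - 2 = x - 2 - 2 ^ n by omega]
          omega

theorem ulam_sierpinski :
    {p : ℕ × ℕ | 1 ≤ p.2 ∧ p.2 ≤ p.1 ∧
        IsUlam (List.replicate p.2 true ++ List.replicate (p.1 - p.2) false)} =
      {((1 : ℕ), (1 : ℕ))} ∪ ⋃ n : ℕ, SierpinskiStage n := by
  ext ⟨x, y⟩
  simp only [Set.mem_setOf_eq, Set.mem_union, Set.mem_singleton_iff, Set.mem_iUnion,
    Prod.mk.injEq]
  constructor
  · rintro ⟨hy, hyx, hU⟩
    rcases eq_or_lt_of_le hyx with rfl | hlt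
    · -- y = x
      simp only [Nat.sub_self, List.replicate_zero, List.append_nil] at hU
      have := (isUlam_replicate_iff true y).1 hU
      exact Or.inl ⟨this, this⟩
    · -- y < x
      have hx2 : 2 ≤ x := by omega
      have hch := (main_lemma x y (x - y) (by omega) hy (by omega)).1 hU
      rw [show y + (x - y) - 2 = x - 2 by omega] at hch
      refine Or.inr ⟨x, ?_⟩
      rw [stage_eq]
      exact ⟨hx2, by have := @Nat.lt_two_pow_self x; omega, hy, hch⟩
  · rintro (⟨rfl, rfl⟩ | ⟨n, hn⟩)
    · refine ⟨le_rfl, le_rfl, ?_⟩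
      simp only [Nat.sub_self, List.replicate_zero, List.append_nil, List.replicate_one]
      exact isUlam_single true
    · rw [stage_eq] at hn
      obtain ⟨h1, h2, h3, h4⟩ := hn
      have hyx : y - 1 ≤ x - 2 := by
        by_contra hcon
        rw [Nat.choose_eq_zero_of_lt (by omega)] at h4
        omega
      refine ⟨h3, by omega, ?_⟩
      refine (main_lemma x y (x - y) (by omega) h3 (by omega)).2 ?_
      rw [show y + (x - y) - 2 = x - 2 by omega]
      exact h4
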